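/- (Jacobi inversion formula) For nonnegative integers j <= i and real alpha, beta with alpha+beta+1 > 0, the sum over k from j to i of (alpha+beta+2k+1) / (alpha+beta+k+j+1)_{i-j+1} times P_{i-k}^{(-alpha-i-1, -beta-i-1)}(x) P_{k-j}^{(alpha+j, beta+j)}(x) equals the Kronecker delta delta_{ij}. -/

import Mathlib

noncomputable def poch (a : ℝ) (k : ℕ) : ℝ := ∏ m ∈ Finset.range k, (a + m)


noncomputable def lag (α : ℝ) (n : ℕ) (x : ℝ) : ℝ :=
  ∑ k ∈ Finset.range (n + 1),
    (-1) ^ k * (poch (α + k + 1) (n - k) / (n - k).factorial) * x ^ k / k.factorial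

noncomputable def jacobi (α β : ℝ) (n : ℕ) (x : ℝ) : ℝ :=
  ∑ k ∈ Finset.range (n + 1),
    poch ((n : ℝ) + α + β + 1) k * poch (α + k + 1) (n - k) /
      (k.factorial * (n - k).factorial) * ((x - 1) / 2) ^ k

noncomputable def charlier (a : ℝ) (n : ℕ) (x : ℝ) : ℝ :=
  ∑ m ∈ Finset.range (n + 1),
    (∏ j ∈ Finset.range m, (x - (j : ℝ))) / m.factorial * (-a) ^ (n - m) / (n - m).factorial

lemma poch_zero (a : ℝ) : poch a 0 = 1 := by simp [poch]

lemma poch_succ (a : ℝ) (k : ℕ) : poch a (k+1) = poch a k * (a + k) := by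
  simp [poch, Finset.prod_range_succ]

lemma poch_add (a : ℝ) (p q : ℕ) : poch a (p+q) = poch a p * poch (a+p) q := by
  rw [poch, Finset.prod_range_add]
  congr 1
  apply Finset.prod_congr rfl
  intro i _
  push_cast
  ring

lemma poch_pos {a : ℝ} (ha : 0 < a) (k : ℕ) : 0 < poch a k := by
  apply Finset.prod_pos
  intro i _
  positivity

lemma poch_neg_eq (x : ℝ) (a : ℕ) : poch (-x) a = (-1)^a * poch (x - a + 1) a := by
  rw [poch, poch, ← Finset.prod_range_reflect]
  rw [show ((-1:ℝ)^a = ∏ _j ∈ Finset.range a, (-1)) by simp, ← Finset.prod_mul_distrib]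
  apply Finset.prod_congr rfl
  intro j hj
  rw [Finset.mem_range] at hj
  have : ((a - 1 - j : ℕ) : ℝ) = a - 1 - j := by
    have h1 : j + 1 ≤ a := hj
    rw [Nat.sub_sub, Nat.cast_sub (by omega)]
    push_cast
    ring
  rw [this]
  ring

lemma poch_succ' (a : ℝ) (k : ℕ) : poch a (k+1) = a * poch (a+1) k := by
  have h0 := poch_add a 1 k
  rw [show k + 1 = 1 + k by omega, h0]
  simp [poch]

lemma tel_alg (u c p q2 q3 fr f2 rr nn : ℝ)
    (hp : p ≠ 0) (hur : u + rr + 1 ≠ 0) (hurM : u + rr + 1 + (nn+1) ≠ 0)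
    (hM : nn + 1 ≠ 0) (hfr : fr ≠ 0) (hf2 : f2 ≠ 0) (hnr1 : nn - rr + 1 ≠ 0)
    (hr1 : rr + 1 ≠ 0) :
    (u + 2*rr + 1) / (p * (u + rr + 1 + (nn+1))) * ((q2 * (-(c + 1 + rr))) / ((nn - rr + 1) * f2)) * (q3 / fr)
    = -(q3 * (c + 1 + rr) * q2 * (rr+1)) / ((nn+1) * ((rr+1) * fr) * f2 * (p * (u + rr + 1 + (nn+1)) / (u + rr + 1)))
      - -(q3 * (q2 * (-(c + 1 + rr))) * rr) / ((nn+1) * fr * ((nn - rr + 1) * f2) * p) := by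
  have hrw : (nn + 1) * ((rr + 1) * fr) * f2 * (p * (u + rr + 1 + (nn+1)) / (u + rr + 1))
      = ((nn + 1) * ((rr + 1) * fr) * f2 * (p * (u + rr + 1 + (nn+1)))) / (u + rr + 1) := by
    ring
  rw [hrw, div_div_eq_mul_div]
  field_simp
  ring

lemma Jsum (u C : ℝ) (hu : 0 < u + 1) (M : ℕ) :
    ∑ r ∈ Finset.range (M+1), (u + 2*r + 1) / poch (u + r + 1) (M+1) *
      (poch (-(C + M)) (M - r) / (M - r).factorial) * (poch (C + 1) r / r.factorial)
    = if M = 0 then 1 else 0 := by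
  obtain _ | N := M
  · simp only [Finset.sum_range_one, if_pos rfl]
    norm_num [poch_succ, poch_zero]
    field_simp
    exact ne_of_gt hu
  · rw [if_neg (Nat.succ_ne_zero N)]
    set F : ℕ → ℝ := fun R =>
      -(poch (C+1) R * poch (-(C + ((N+1:ℕ):ℝ))) (N+1 - R) * R) /
        ((N+1) * R.factorial * (N+1 - R).factorial * poch (u + R + 1) (N+1)) with hF
    have key : ∀ r ∈ Finset.range (N+1), (u + 2*r + 1) / poch (u + r + 1) (N+1+1) *
        (poch (-(C + ((N+1:ℕ):ℝ))) (N+1 - r) / (N+1 - r).factorial) * (poch (C + 1) r / r.factorial)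
        = F (r+1) - F r := by
      intro r hr
      rw [Finset.mem_range] at hr
      have hrN : r ≤ N := by omega
      have hr0 : (0:ℝ) ≤ r := Nat.cast_nonneg r
      have hN0 : (0:ℝ) ≤ N := Nat.cast_nonneg N
      have hur : (0:ℝ) < u + r + 1 := by linarith
      have hurM : (0:ℝ) < u + r + 1 + ((N:ℝ)+1) := by linarith
      have hP : 0 < poch (u + r + 1) (N+1) := poch_pos hur _
      have hP2 : poch (u + (r:ℝ) + 1 + 1) (N+1) = poch (u + r + 1) (N+1) * (u + r + 1 + ((N:ℝ)+1)) / (u + r + 1) := by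
        have h1 : (u + (r:ℝ) + 1) * poch (u + r + 1 + 1) (N+1) = poch (u + r + 1) (N+1) * (u + (r:ℝ) + 1 + ((N:ℝ)+1)) := by
          rw [← poch_succ']
          rw [poch_succ (u + (r:ℝ) + 1) (N+1)]
          push_cast
          ring
        field_simp
        linarith [h1]
      have hPM1 : poch (u + (r:ℝ) + 1) (N+1+1) = poch (u + r + 1) (N+1) * (u + (r:ℝ) + 1 + ((N:ℝ)+1)) := by
        rw [poch_succ (u + (r:ℝ) + 1) (N+1)]
        push_cast
        ring
      have e1 : N+1 - r = (N - r) + 1 := by omega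
      have e2 : N+1 - (r+1) = N - r := by omega
      have e3 : ((N - r : ℕ) : ℝ) = (N:ℝ) - r := Nat.cast_sub hrN
      have e4 : poch (-(C + ((N+1:ℕ):ℝ))) ((N-r)+1) = poch (-(C + ((N+1:ℕ):ℝ))) (N-r) * (-(C + 1 + r)) := by
        rw [poch_succ, e3]
        push_cast
        ring_nf
      have hurr : poch (u + ((r+1:ℕ):ℝ) + 1) (N+1) = poch (u + r + 1) (N+1) * (u + r + 1 + ((N:ℝ)+1)) / (u + r + 1) := by
        rw [show u + ((r+1:ℕ):ℝ) + 1 = u + (r:ℝ) + 1 + 1 by push_cast; ring, hP2]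
      simp only [hF, e1, e2, e4, hurr, hPM1, poch_succ (C+1) r, Nat.factorial_succ]
      have hfac1 : (0:ℝ) < (r.factorial : ℝ) := by positivity
      have hfac2 : (0:ℝ) < ((N-r).factorial : ℝ) := by positivity
      have H := tel_alg u C (poch (u + (r:ℝ) + 1) (N+1)) (poch (-(C + ((N+1:ℕ):ℝ))) (N-r))
        (poch (C+1) r) (r.factorial : ℝ) ((N-r).factorial : ℝ) (r:ℝ) (N:ℝ)
        (ne_of_gt hP) (ne_of_gt hur) (ne_of_gt hurM) (by linarith) (ne_of_gt hfac1)
        (ne_of_gt hfac2) (by rw [← e3]; positivity) (by positivity)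
      push_cast [e3] at H ⊢
      linear_combination H
    rw [Finset.sum_range_succ, Finset.sum_congr rfl key, Finset.sum_range_sub F]
    have hF0 : F 0 = 0 := by simp [hF]
    have hN0 : (0:ℝ) ≤ N := Nat.cast_nonneg N
    have huM : (0:ℝ) < u + ((N+1:ℕ):ℝ) + 1 := by push_cast; linarith
    have hP : 0 < poch (u + ((N+1:ℕ):ℝ) + 1) (N+1) := poch_pos huM _
    have hPM1 : poch (u + ((N+1:ℕ):ℝ) + 1) (N+1+1)
        = poch (u + ((N+1:ℕ):ℝ) + 1) (N+1) * (u + ((N+1:ℕ):ℝ) + 1 + ((N+1:ℕ):ℝ)) :=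
      poch_succ _ _
    simp only [hF, hPM1, Nat.sub_self, poch_zero]
    norm_num
    have h2 : (0:ℝ) < u + ((N+1:ℕ):ℝ) + 1 + ((N+1:ℕ):ℝ) := by push_cast; linarith
    have hfacM : (0:ℝ) < ((N+1).factorial : ℝ) := by positivity
    push_cast at hP h2 ⊢
    field_simp
    ring

lemma cancel_alg (w p1 p2 p3 q2 q3 s fa fb f2 fr : ℝ) (hp1 : p1 ≠ 0) (hp3 : p3 ≠ 0)
    (hfa : fa ≠ 0) (hfb : fb ≠ 0) :
    w / (p1 * (p2 * p3)) * (s * p3 * q2 / (fa * f2)) * (p1 * q3 / (fb * fr))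
    = s / (fa * fb) * (w / p2 * (q2 / f2) * (q3 / fr)) := by
  have h : w / (p1 * (p2 * p3)) * (s * p3 * q2 / (fa * f2)) * (p1 * q3 / (fb * fr))
      = s / (fa * fb) * (w / p2 * (q2 / f2) * (q3 / fr)) * (p3 / p3) * (p1 / p1) := by
    ring
  rw [h, div_self hp3, div_self hp1, mul_one, mul_one]

lemma inner_lemma (A B : ℝ) (h1 : 0 < A + B + 1) (m a b : ℕ) (hab : a + b ≤ m) :
    ∑ l ∈ Finset.Icc b (m - a),
      (A + B + 2*l + 1) / poch (A + B + l + 1) (m+1)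
        * (poch (-(A + B + m + l + 1)) a * poch (a - A - m) (m - l - a) / (a.factorial * (m - l - a).factorial))
        * (poch (l + A + B + 1) b * poch (A + b + 1) (l - b) / (b.factorial * (l - b).factorial))
    = if a + b = m then ((-1:ℝ))^a / (a.factorial * b.factorial) else 0 := by
  obtain ⟨M, rfl⟩ : ∃ M, m = a + b + M := ⟨m - a - b, by omega⟩
  set u : ℝ := A + B + 2*b with hu
  set C : ℝ := A + b with hC
  have hb0 : (0:ℝ) ≤ b := Nat.cast_nonneg b
  have hu1 : 0 < u + 1 := by rw [hu]; linarith
  have e0 : a + b + M - a = b + M := by omega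
  rw [e0, ← Finset.Ico_add_one_right_eq_Icc, Finset.sum_Ico_eq_sum_range, show b + M + 1 - b = M + 1 by omega]
  have key : ∀ r ∈ Finset.range (M+1),
      (A + B + 2*(↑(b+r)) + 1) / poch (A + B + (↑(b+r)) + 1) (a+b+M+1)
        * (poch (-(A + B + (↑(a+b+M)) + (↑(b+r)) + 1)) a * poch (a - A - (↑(a+b+M))) (a+b+M - (b+r) - a) / (a.factorial * (a+b+M - (b+r) - a).factorial))
        * (poch ((↑(b+r)) + A + B + 1) b * poch (A + b + 1) ((b+r) - b) / (b.factorial * ((b+r) - b).factorial))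
      = ((-1:ℝ))^a / (a.factorial * b.factorial) *
        ((u + 2*r + 1) / poch (u + r + 1) (M+1) *
          (poch (-(C + M)) (M - r) / (M - r).factorial) * (poch (C + 1) r / r.factorial)) := by
    intro r hr
    rw [Finset.mem_range] at hr
    have hrM : r ≤ M := by omega
    have hr0 : (0:ℝ) ≤ r := Nat.cast_nonneg r
    have hM0 : (0:ℝ) ≤ M := Nat.cast_nonneg M
    have ei1 : a+b+M - (b+r) - a = M - r := by omega
    have ei2 : (b+r) - b = r := by omega
    have ei3 : a+b+M+1 = b + ((M+1) + a) := by omega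
    have hX : (0:ℝ) < A + B + (↑(b+r)) + 1 := by push_cast; linarith
    have hsplit : poch (A + B + (↑(b+r)) + 1) (a+b+M+1)
        = poch (A + B + (↑(b+r)) + 1) b * (poch (u + r + 1) (M+1) * poch (u + r + M + 2) a) := by
      rw [ei3, poch_add, poch_add]
      congr 2
      · congr 1; push_cast; ring
      · congr 1; push_cast; ring
    have hneg : poch (-(A + B + (↑(a+b+M)) + (↑(b+r)) + 1)) a
        = (-1)^a * poch (u + r + M + 2) a := by
      rw [show -(A + B + (↑(a+b+M):ℝ) + (↑(b+r)) + 1) = -(A + B + (↑(a+b+M):ℝ) + (↑(b+r)) + 1) from rfl]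
      rw [poch_neg_eq]
      congr 1
      congr 1; push_cast [hu]; ring
    have harg1 : (↑a - A - (↑(a+b+M):ℝ)) = -(C + M) := by push_cast [hC]; ring
    have harg2 : ((↑(b+r):ℝ) + A + B + 1) = A + B + (↑(b+r)) + 1 := by ring
    have harg3 : (A + (b:ℝ) + 1) = C + 1 := by rw [hC]
    have harg4 : (A + B + 2*((↑(b+r)):ℝ) + 1) = u + 2*r + 1 := by push_cast [hu]; ring
    rw [hsplit, hneg, harg1, harg2, harg3, harg4, ei1, ei2]
    have hPX : 0 < poch (A + B + (↑(b+r)) + 1) b := poch_pos hX b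
    have hP3 : 0 < poch (u + (r:ℝ) + M + 2) a := poch_pos (by rw [hu]; linarith) a
    have hfa : (0:ℝ) < (a.factorial : ℝ) := by positivity
    have hfb : (0:ℝ) < (b.factorial : ℝ) := by positivity
    exact cancel_alg _ _ _ _ _ _ _ _ _ _ _ (ne_of_gt hPX) (ne_of_gt hP3)
      (ne_of_gt hfa) (ne_of_gt hfb)
  rw [Finset.sum_congr rfl key, ← Finset.mul_sum, Jsum u C hu1 M]
  by_cases hM : M = 0
  · simp [hM]
  · rw [if_neg hM, if_neg (by omega), mul_zero]

lemma sum_range_extend (n N : ℕ) (h : n ≤ N) (f : ℕ → ℝ) :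
    ∑ a ∈ Finset.range (n+1), f a = ∑ a ∈ Finset.range (N+1), if a ≤ n then f a else 0 := by
  rw [← Finset.sum_filter]
  apply Finset.sum_congr _ (fun _ _ => rfl)
  ext a
  simp only [Finset.mem_range, Finset.mem_filter]
  omega

lemma mul_ite_ite (c u v : ℝ) (P Q R : Prop) [Decidable P] [Decidable Q] [Decidable R]
    (hR : R ↔ P ∧ Q) : c * (if P then u else 0) * (if Q then v else 0)
      = if R then c * u * v else 0 := by
  by_cases hP : P <;> by_cases hQ : Q <;>
    simp [hP, hQ, hR, *]

theorem stmt11 (α β x : ℝ) (h : α + β + 1 > 0) (i j : ℕ) (hij : j ≤ i) :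
    ∑ k ∈ Finset.Icc j i,
      (α + β + 2 * k + 1) / poch (α + β + k + j + 1) (i - j + 1) *
        jacobi (-α - i - 1) (-β - i - 1) (i - k) x *
        jacobi (α + j) (β + j) (k - j) x =
      if i = j then 1 else 0 := by
  obtain ⟨m, rfl⟩ : ∃ m, i = j + m := ⟨i - j, by omega⟩
  set A : ℝ := α + (j:ℝ) with hA
  set B : ℝ := β + (j:ℝ) with hB
  set y : ℝ := (x - 1) / 2 with hy
  have hAB : 0 < A + B + 1 := by
    have : (0:ℝ) ≤ j := Nat.cast_nonneg j
    rw [hA, hB]; linarith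
  have hRHS : (if j + m = j then (1:ℝ) else 0) = if m = 0 then 1 else 0 := by
    by_cases hm : m = 0
    · simp [hm]
    · rw [if_neg (by omega), if_neg hm]
  rw [hRHS, show j + m - j + 1 = m + 1 from by omega,
    ← Finset.Ico_add_one_right_eq_Icc, Finset.sum_Ico_eq_sum_range,
    show j + m + 1 - j = m + 1 from by omega]
  have trans1 : ∀ l ∈ Finset.range (m+1),
      (α + β + 2 * (↑(j+l)) + 1) / poch (α + β + (↑(j+l)) + j + 1) (m + 1) *
        jacobi (-α - (↑(j+m)) - 1) (-β - (↑(j+m)) - 1) (j + m - (j+l)) x *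
        jacobi (α + j) (β + j) ((j+l) - j) x
      = ∑ a ∈ Finset.range (m+1), ∑ b ∈ Finset.range (m+1),
          (if a ≤ m - l then
            (if b ≤ l then
              ((A + B + 2*(l:ℝ) + 1) / poch (A + B + l + 1) (m+1)
                * (poch (-(A + B + m + l + 1)) a * poch ((a:ℝ) - A - m) (m - l - a) / (a.factorial * (m - l - a).factorial) * y ^ a))
              * (poch ((l:ℝ) + A + B + 1) b * poch (A + b + 1) (l - b) / (b.factorial * (l - b).factorial) * y ^ b)
            else 0)
          else 0) := by
    intro l hl
    rw [Finset.mem_range] at hl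
    have hlm : l ≤ m := by omega
    have e1 : j + m - (j + l) = m - l := by omega
    have e2 : (j + l) - j = l := by omega
    rw [e1, e2, jacobi, jacobi]
    have eJ1 : ∑ k ∈ Finset.range (m - l + 1),
        poch ((↑(m-l):ℝ) + (-α - (↑(j+m)) - 1) + (-β - (↑(j+m)) - 1) + 1) k *
          poch ((-α - (↑(j+m)) - 1) + k + 1) (m - l - k) / (k.factorial * (m - l - k).factorial) * y ^ k
        = ∑ a ∈ Finset.range (m - l + 1),
          poch (-(A + B + m + l + 1)) a * poch ((a:ℝ) - A - m) (m - l - a) / (a.factorial * (m - l - a).factorial) * y ^ a := by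
      apply Finset.sum_congr rfl
      intro a _
      rw [show ((↑(m-l):ℝ) + (-α - (↑(j+m)) - 1) + (-β - (↑(j+m)) - 1) + 1) = -(A + B + m + l + 1) by
          rw [hA, hB]; push_cast [Nat.cast_sub hlm]; ring,
        show ((-α - ((↑(j+m)):ℝ) - 1) + a + 1) = (a:ℝ) - A - m by
          rw [hA]; push_cast; ring]
    have eJ2 : ∑ k ∈ Finset.range (l + 1),
        poch ((l:ℝ) + (α + j) + (β + j) + 1) k *
          poch ((α + j) + k + 1) (l - k) / (k.factorial * (l - k).factorial) * y ^ k
        = ∑ b ∈ Finset.range (l + 1),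
          poch ((l:ℝ) + A + B + 1) b * poch (A + b + 1) (l - b) / (b.factorial * (l - b).factorial) * y ^ b := by
      apply Finset.sum_congr rfl
      intro b _
      rw [show ((l:ℝ) + (α + j) + (β + j) + 1) = (l:ℝ) + A + B + 1 by rw [hA, hB],
        show ((α + (j:ℝ)) + b + 1) = A + (b:ℝ) + 1 by rw [hA]]
    rw [eJ1, eJ2,
      show (α + β + 2 * (↑(j+l):ℝ) + 1) = A + B + 2*(l:ℝ) + 1 by rw [hA, hB]; push_cast; ring,
      show (α + β + (↑(j+l):ℝ) + j + 1) = A + B + (l:ℝ) + 1 by rw [hA, hB]; push_cast; ring]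
    rw [sum_range_extend (m - l) m (by omega), sum_range_extend l m hlm, mul_assoc,
      Finset.sum_mul_sum, Finset.mul_sum]
    apply Finset.sum_congr rfl
    intro a _
    rw [Finset.mul_sum]
    apply Finset.sum_congr rfl
    intro b _
    by_cases ha : a ≤ m - l <;> by_cases hb : b ≤ l <;> simp [ha, hb] <;> ring
  rw [Finset.sum_congr rfl trans1]
  rw [Finset.sum_comm]
  rw [Finset.sum_congr rfl (fun a (_ : a ∈ Finset.range (m+1)) => Finset.sum_comm)]
  have step3 : ∀ a ∈ Finset.range (m+1), ∀ b ∈ Finset.range (m+1),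
      ∑ l ∈ Finset.range (m+1),
        (if a ≤ m - l then
          (if b ≤ l then
            ((A + B + 2*(l:ℝ) + 1) / poch (A + B + l + 1) (m+1)
              * (poch (-(A + B + m + l + 1)) a * poch ((a:ℝ) - A - m) (m - l - a) / (a.factorial * (m - l - a).factorial) * y ^ a))
            * (poch ((l:ℝ) + A + B + 1) b * poch (A + b + 1) (l - b) / (b.factorial * (l - b).factorial) * y ^ b)
          else 0)
        else 0)
      = (if a + b = m then ((-1:ℝ))^a / (a.factorial * b.factorial) else 0) * (y^a * y^b) := by
    intro a ha b hb
    rw [Finset.mem_range] at ha hb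
    have conv1 : ∀ l ∈ Finset.range (m+1),
        (if a ≤ m - l then
          (if b ≤ l then
            ((A + B + 2*(l:ℝ) + 1) / poch (A + B + l + 1) (m+1)
              * (poch (-(A + B + m + l + 1)) a * poch ((a:ℝ) - A - m) (m - l - a) / (a.factorial * (m - l - a).factorial) * y ^ a))
            * (poch ((l:ℝ) + A + B + 1) b * poch (A + b + 1) (l - b) / (b.factorial * (l - b).factorial) * y ^ b)
          else 0)
        else 0)
        = if l ∈ Finset.Icc b (m - a) then
            ((A + B + 2*(l:ℝ) + 1) / poch (A + B + l + 1) (m+1)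
              * (poch (-(A + B + m + l + 1)) a * poch ((a:ℝ) - A - m) (m - l - a) / (a.factorial * (m - l - a).factorial))
              * (poch ((l:ℝ) + A + B + 1) b * poch (A + b + 1) (l - b) / (b.factorial * (l - b).factorial))) * (y^a * y^b)
          else 0 := by
      intro l hl
      rw [Finset.mem_range] at hl
      simp only [Finset.mem_Icc]
      split_ifs with h1 h2 h3 <;> first | ring1 | rfl | (exfalso; omega)
    rw [Finset.sum_congr rfl conv1, Finset.sum_ite_mem,
      Finset.inter_eq_right.mpr (by intro z hz; rw [Finset.mem_Icc] at hz; rw [Finset.mem_range]; omega)]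
    by_cases hab : a + b ≤ m
    · rw [← Finset.sum_mul, inner_lemma A B hAB m a b hab]
    · rw [Finset.Icc_eq_empty (by rw [not_le]; omega), Finset.sum_empty, if_neg (by omega), zero_mul]
  rw [Finset.sum_congr rfl (fun a ha => Finset.sum_congr rfl (step3 a ha))]
  have step4 : ∀ a ∈ Finset.range (m+1),
      ∑ b ∈ Finset.range (m+1),
        (if a + b = m then ((-1:ℝ))^a / (a.factorial * b.factorial) else 0) * (y^a * y^b)
      = ((-1:ℝ))^a * (m.choose a) * (y^m / m.factorial) := by
    intro a ha
    rw [Finset.mem_range] at ha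
    have conv2 : ∀ b ∈ Finset.range (m+1),
        (if a + b = m then ((-1:ℝ))^a / (a.factorial * b.factorial) else 0) * (y^a * y^b)
        = if b = m - a then ((-1:ℝ))^a / (a.factorial * b.factorial) * (y^a * y^b) else 0 := by
      intro b hb
      rw [Finset.mem_range] at hb
      split_ifs with h1 h2 h3 <;> first | ring1 | rfl | (exfalso; omega) | (rw [zero_mul])
    rw [Finset.sum_congr rfl conv2, Finset.sum_ite_eq' (Finset.range (m+1)) (m - a)]
    rw [if_pos (by rw [Finset.mem_range]; omega)]
    rw [show y^a * y^(m-a) = y^m by rw [← pow_add]; congr 1; omega]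
    rw [Nat.cast_choose ℝ (by omega : a ≤ m)]
    have h1 : (0:ℝ) < (a.factorial : ℝ) := by positivity
    have h2 : (0:ℝ) < ((m-a).factorial : ℝ) := by positivity
    have h3 : (0:ℝ) < (m.factorial : ℝ) := by positivity
    field_simp
  rw [Finset.sum_congr rfl step4, ← Finset.sum_mul]
  have alt : ∑ a ∈ Finset.range (m+1), ((-1:ℝ))^a * (m.choose a) = if m = 0 then 1 else 0 := by
    have h0 := Int.alternating_sum_range_choose (n := m)
    have h1 := congrArg (fun z : ℤ => (z : ℝ)) h0
    push_cast at h1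
    rw [h1]
  rw [alt]
  by_cases hm : m = 0
  · simp [hm]
  · simp [hm]
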